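/- Let R > 0 and let f : ℝ → ℝ be real analytic on the half-open interval [0, R) (i.e., analytic at every point of [0,R)), with f(x) ≥ 0 for all x ∈ [0, R), and f not identically zero on [0, R). Let g(x) = f(x) · Real.log (f(x)). Then there exists r ∈ (0, R) such that g is real analytic on (0, r) and the following equivalence holds: the derivative of g is unbounded on (0, r') for every r' ∈ (0, r] if and only if f(0) = 0 and deriv f 0 ≠ 0; equivalently, the set {|deriv g x| : x ∈ (0, r)} is bounded above if and only if ¬(f(0) = 0 ∧ deriv f 0 ≠ 0). -/

import Mathlib

open Filter Set Topology

lemma analyticAt_rlog {x : ℝ} (hx : 0 < x) : AnalyticAt ℝ Real.log x := by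
  have hc : AnalyticAt ℂ Complex.log (Complex.ofRealCLM x) := by
    apply analyticAt_clog
    exact Or.inl (by simpa using hx)
  have h1 : AnalyticAt ℝ (fun y : ℝ => (Complex.reCLM (Complex.log (Complex.ofRealCLM y)))) x :=
    (Complex.reCLM.analyticAt _).comp ((hc.restrictScalars).comp (Complex.ofRealCLM.analyticAt x))
  apply h1.congr
  filter_upwards [eventually_gt_nhds hx] with y hy
  simp [Complex.log_ofReal_re]

lemma analyticAt_deriv' {h : ℝ → ℝ} {x : ℝ} (ha : AnalyticAt ℝ h x) :
    AnalyticAt ℝ (deriv h) x := by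
  obtain ⟨U, hU, hUa⟩ := ha.eventually_analyticAt.exists_mem
  exact (AnalyticOnNhd.deriv (fun y hy => hUa y hy)) x (mem_of_mem_nhds hU)

lemma bdd_of_tendsto {h : ℝ → ℝ} {r s L : ℝ} (hr : 0 < r) (hrs : r < s)
    (hc : ∀ x ∈ Set.Ioo (0:ℝ) s, ContinuousAt h x)
    (hL : Tendsto h (𝓝[>] (0:ℝ)) (𝓝 L)) :
    BddAbove ((fun x => |h x|) '' Set.Ioo 0 r) := by
  have habs : ∀ᶠ x in 𝓝[>] (0:ℝ), |h x| ≤ |L| + 1 := by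
    have := hL.abs.eventually (eventually_le_nhds (by linarith [abs_nonneg L] : |L| < |L| + 1))
    exact this
  obtain ⟨δ, hδ0, hδ⟩ := (mem_nhdsGT_iff_exists_Ioo_subset).1 habs
  set δ' := min δ r with hδ'
  have hδ'0 : 0 < δ' := lt_min hδ0 hr
  have hK : IsCompact (Set.Icc δ' r) := isCompact_Icc
  have hKc : ContinuousOn (fun x => |h x|) (Set.Icc δ' r) := by
    intro x hx
    exact ((hc x ⟨lt_of_lt_of_le hδ'0 hx.1, lt_of_le_of_lt hx.2 hrs⟩).abs).continuousWithinAt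
  obtain ⟨M, hM⟩ := (hK.bddAbove_image hKc)
  refine ⟨max (|L| + 1) M, ?_⟩
  rintro y ⟨x, hx, rfl⟩
  rcases lt_or_ge x δ' with hxδ | hxδ
  · exact le_max_of_le_left (hδ ⟨hx.1, lt_of_lt_of_le hxδ (min_le_left _ _)⟩)
  · exact le_max_of_le_right (hM ⟨x, ⟨hxδ, hx.2.le⟩, rfl⟩)

theorem stmt16 (R : ℝ) (hR : 0 < R) (f : ℝ → ℝ)
    (hf : AnalyticOnNhd ℝ f (Set.Ico 0 R))
    (hnn : ∀ x ∈ Set.Ico 0 R, 0 ≤ f x)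
    (hne : ∃ x ∈ Set.Ico 0 R, f x ≠ 0) :
    ∃ r ∈ Set.Ioo 0 R,
      AnalyticOnNhd ℝ (fun x => f x * Real.log (f x)) (Set.Ioo 0 r) ∧
      (BddAbove ((fun x => |deriv (fun y => f y * Real.log (f y)) x|) '' Set.Ioo 0 r) ↔
        ¬ (f 0 = 0 ∧ deriv f 0 ≠ 0)) := by
  set h : ℝ → ℝ := fun y => f y * Real.log (f y) with hh
  have h0R : (0:ℝ) ∈ Set.Ico 0 R := ⟨le_refl 0, hR⟩
  have hf0 : AnalyticAt ℝ f 0 := hf 0 h0R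
  -- f is not eventually zero at 0
  have hnotall : ¬ ∀ᶠ z in 𝓝 (0:ℝ), f z = 0 := by
    intro hev
    obtain ⟨x, hx, hfx⟩ := hne
    exact hfx (hf.eqOn_zero_of_preconnected_of_eventuallyEq_zero isPreconnected_Ico h0R hev hx)
  obtain ⟨n, G, hG, hG0, hfe⟩ := hf0.exists_eventuallyEq_pow_smul_nonzero_iff.mpr hnotall
  have hfe' : ∀ᶠ z in 𝓝 (0:ℝ), f z = z ^ n * G z := by
    filter_upwards [hfe] with z hz
    simpa [smul_eq_mul] using hz
  -- G 0 > 0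
  have hG0pos : 0 < G 0 := by
    rcases hG0.lt_or_gt with hneg | hpos
    · exfalso
      have hev : ∀ᶠ z in 𝓝 (0:ℝ), G z < 0 :=
        hG.continuousAt.eventually_lt continuousAt_const hneg
      have hall : ∀ᶠ z in 𝓝[>] (0:ℝ), (f z = z ^ n * G z ∧ G z < 0) ∧ z < R :=
        ((hfe'.and hev).and (eventually_lt_nhds hR)).filter_mono nhdsWithin_le_nhds
      obtain ⟨x, ⟨⟨hfx, hGx⟩, hxR⟩, hx0⟩ := (hall.and self_mem_nhdsWithin).exists
      have hfxpos : 0 ≤ f x := hnn x ⟨le_of_lt hx0, hxR⟩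
      have : f x < 0 := by
        rw [hfx]
        exact mul_neg_of_pos_of_neg (pow_pos hx0 n) hGx
      linarith
    · exact hpos
  -- gather eventual facts in a ball
  have hGc : ∀ᶠ z in 𝓝 (0:ℝ), 0 < G z :=
    continuousAt_const.eventually_lt hG.continuousAt hG0pos
  have hGa : ∀ᶠ z in 𝓝 (0:ℝ), AnalyticAt ℝ G z := hG.eventually_analyticAt
  obtain ⟨ε, hε0, hball⟩ := Metric.eventually_nhds_iff_ball.mp ((hfe'.and hGc).and hGa)
  set s := min ε R with hs
  have hs0 : 0 < s := lt_min hε0 hR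
  have hsR : s ≤ R := min_le_right _ _
  have hsε : s ≤ ε := min_le_left _ _
  have key : ∀ x : ℝ, 0 ≤ x → x < s → (f x = x ^ n * G x ∧ 0 < G x) ∧ AnalyticAt ℝ G x := by
    intro x h1 h2
    apply hball
    simp only [Metric.mem_ball, Real.dist_eq, sub_zero, abs_of_nonneg h1]
    linarith
  have hxmem : ∀ x ∈ Set.Ioo (0:ℝ) s, x ∈ Set.Ico (0:ℝ) R :=
    fun x hx => ⟨hx.1.le, lt_of_lt_of_le hx.2 hsR⟩
  have hfpos : ∀ x ∈ Set.Ioo (0:ℝ) s, 0 < f x := by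
    intro x hx
    obtain ⟨⟨he, hg⟩, _⟩ := key x hx.1.le hx.2
    rw [he]
    exact mul_pos (pow_pos hx.1 n) hg
  have hanal : ∀ x ∈ Set.Ioo (0:ℝ) s, AnalyticAt ℝ h x := by
    intro x hx
    exact (hf x (hxmem x hx)).mul ((analyticAt_rlog (hfpos x hx)).comp (hf x (hxmem x hx)))
  have hderiv : ∀ x ∈ Set.Ioo (0:ℝ) s, deriv h x = deriv f x * (Real.log (f x) + 1) := by
    intro x hx
    have hfd : HasDerivAt f (deriv f x) x := ((hf x (hxmem x hx)).differentiableAt).hasDerivAt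
    have hlog : HasDerivAt (fun y => Real.log (f y)) ((f x)⁻¹ * deriv f x) x :=
      (Real.hasDerivAt_log (ne_of_gt (hfpos x hx))).comp x hfd
    have hd : deriv (fun y => f y * Real.log (f y)) x = _ := (hfd.mul hlog).deriv
    rw [hh, hd]
    field_simp [(hfpos x hx).ne']
  have hderivcont : ∀ x ∈ Set.Ioo (0:ℝ) s, ContinuousAt (deriv h) x :=
    fun x hx => (analyticAt_deriv' (hanal x hx)).continuousAt
  -- derivative of f at 0
  have hGd : HasDerivAt G (deriv G 0) 0 := hG.differentiableAt.hasDerivAt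
  have hψ : HasDerivAt (fun z : ℝ => z ^ n * G z)
      ((n * (0:ℝ) ^ (n-1)) * G 0 + (0:ℝ) ^ n * deriv G 0) 0 := (hasDerivAt_pow n 0).mul hGd
  have hdf0 : deriv f 0 = (n * (0:ℝ) ^ (n-1)) * G 0 + (0:ℝ) ^ n * deriv G 0 := by
    rw [Filter.EventuallyEq.deriv_eq hfe']
    exact hψ.deriv
  have hf00 : f 0 = (0:ℝ) ^ n * G 0 := hfe'.self_of_nhds
  have hIooR : s / 2 ∈ Set.Ioo 0 R := ⟨half_pos hs0, lt_of_lt_of_le (by linarith) hsR⟩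
  have hanalIoo : AnalyticOnNhd ℝ h (Set.Ioo 0 (s/2)) :=
    fun x hx => hanal x ⟨hx.1, hx.2.trans (by linarith)⟩
  refine ⟨s/2, hIooR, hanalIoo, ?_⟩
  match n with
  | 0 =>
    -- f 0 = G 0 > 0 : bounded, RHS true
    have hf0pos : 0 < f 0 := by rw [hf00]; simpa using hG0pos
    have hanal0 : AnalyticAt ℝ h 0 := hf0.mul ((analyticAt_rlog hf0pos).comp hf0)
    have hbdd : BddAbove ((fun x => |deriv h x|) '' Set.Ioo 0 (s/2)) := by
      apply bdd_of_tendsto (half_pos hs0) (by linarith : s/2 < s) hderivcont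
      exact ((analyticAt_deriv' hanal0).continuousAt.tendsto).mono_left nhdsWithin_le_nhds
    exact iff_of_true hbdd (fun hc => hf0pos.ne' hc.1)
  | 1 =>
    -- f 0 = 0, deriv f 0 = G 0 ≠ 0 : unbounded, RHS false
    have hf00' : f 0 = 0 := by simpa using hf00
    have hdf0' : deriv f 0 = G 0 := by simpa using hdf0
    have hT : Tendsto (fun x => deriv f x * (Real.log (f x) + 1)) (𝓝[>] (0:ℝ)) atBot := by
      have hdfc : Tendsto (deriv f) (𝓝[>] (0:ℝ)) (𝓝 (G 0)) := by
        have := (analyticAt_deriv' hf0).continuousAt.tendsto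
        rw [hdf0'] at this
        exact this.mono_left nhdsWithin_le_nhds
      have hflim : Tendsto f (𝓝[>] (0:ℝ)) (𝓝[>] (0:ℝ)) := by
        rw [tendsto_nhdsWithin_iff]
        constructor
        · have := hf0.continuousAt.tendsto
          rw [hf00'] at this
          exact this.mono_left nhdsWithin_le_nhds
        · filter_upwards [Ioo_mem_nhdsGT hs0] with x hx
          exact hfpos x hx
      have hlogf : Tendsto (fun x => Real.log (f x) + 1) (𝓝[>] (0:ℝ)) atBot := by
        apply tendsto_atBot_add_const_right
        exact Real.tendsto_log_nhdsGT_zero.comp hflim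
      exact Filter.Tendsto.pos_mul_atBot hG0pos hdfc hlogf
    have hT' : Tendsto (fun x => |deriv h x|) (𝓝[>] (0:ℝ)) atTop := by
      apply tendsto_abs_atBot_atTop.comp
      apply hT.congr'
      filter_upwards [Ioo_mem_nhdsGT hs0] with x hx
      exact (hderiv x hx).symm
    have hnb : ¬ BddAbove ((fun x => |deriv h x|) '' Set.Ioo 0 (s/2)) := by
      rintro ⟨M, hM⟩
      have h1 : ∀ᶠ x in 𝓝[>] (0:ℝ), M < |deriv h x| := hT'.eventually_gt_atTop M
      have h2 : ∀ᶠ x in 𝓝[>] (0:ℝ), x ∈ Set.Ioo (0:ℝ) (s/2) :=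
        Filter.eventually_of_mem (Ioo_mem_nhdsGT (half_pos hs0)) (fun x hx => hx)
      obtain ⟨x, hx1, hx2⟩ := (h1.and h2).exists
      exact absurd (hM ⟨x, hx2, rfl⟩) (not_le.mpr hx1)
    refine iff_of_false hnb (not_not_intro ⟨hf00', ?_⟩)
    rw [hdf0']
    exact hG0
  | (m+2) =>
    -- f 0 = 0, deriv f 0 = 0 : bounded, RHS true
    have hf00' : f 0 = 0 := by simp [hf00]
    have hdf0' : deriv f 0 = 0 := by simp [hdf0]
    set φ : ℝ → ℝ := fun x =>
      ((m+2 : ℝ) * G x + x * deriv G x) *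
        ((m+2 : ℝ) * (x ^ (m+1) * Real.log x) + x ^ (m+1) * (Real.log (G x) + 1)) with hφ
    have heq : ∀ᶠ x in 𝓝[>] (0:ℝ), deriv h x = φ x := by
      filter_upwards [Ioo_mem_nhdsGT hs0] with x hx
      obtain ⟨⟨hfx, hGx⟩, hGax⟩ := key x hx.1.le hx.2
      have hballx : Metric.ball (0:ℝ) ε ∈ 𝓝 x := by
        apply Metric.isOpen_ball.mem_nhds
        simp only [Metric.mem_ball, Real.dist_eq, sub_zero, abs_of_nonneg hx.1.le]
        linarith [hx.2]
      have hev : f =ᶠ[𝓝 x] fun z => z ^ (m+2) * G z := by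
        filter_upwards [hballx] with y hy
        exact (hball y hy).1.1
      have hGdx : HasDerivAt G (deriv G x) x := hGax.differentiableAt.hasDerivAt
      have hdx : deriv f x = (↑(m+2) * x ^ (m+1)) * G x + x ^ (m+2) * deriv G x := by
        rw [Filter.EventuallyEq.deriv_eq hev]
        have : deriv (fun z => z ^ (m+2) * G z) x = _ := ((hasDerivAt_pow (m+2) x).mul hGdx).deriv
        simpa using this
      have hlogx : Real.log (f x) = (m+2 : ℝ) * Real.log x + Real.log (G x) := by
        rw [hfx, Real.log_mul (pow_ne_zero _ hx.1.ne') hGx.ne', Real.log_pow]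
        push_cast
        ring
      rw [hderiv x hx, hdx, hlogx, hφ]
      push_cast
      ring
    have hTφ : Tendsto φ (𝓝[>] (0:ℝ)) (𝓝 0) := by
      have tG : Tendsto G (𝓝[>] (0:ℝ)) (𝓝 (G 0)) :=
        hG.continuousAt.tendsto.mono_left nhdsWithin_le_nhds
      have tG' : Tendsto (deriv G) (𝓝[>] (0:ℝ)) (𝓝 (deriv G 0)) :=
        (analyticAt_deriv' hG).continuousAt.tendsto.mono_left nhdsWithin_le_nhds
      have tid : Tendsto (fun x : ℝ => x) (𝓝[>] (0:ℝ)) (𝓝 0) :=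
        tendsto_id.mono_left nhdsWithin_le_nhds
      have tB : Tendsto (fun x : ℝ => x ^ (m+1) * Real.log x) (𝓝[>] (0:ℝ)) (𝓝 0) := by
        have := tendsto_log_mul_rpow_nhdsGT_zero
          (by positivity : (0:ℝ) < (m+1 : ℕ))
        apply this.congr'
        filter_upwards [self_mem_nhdsWithin] with x hx
        rw [Real.rpow_natCast]
        ring
      have tD : Tendsto (fun x : ℝ => x ^ (m+1)) (𝓝[>] (0:ℝ)) (𝓝 0) := by
        have : Tendsto (fun x : ℝ => x ^ (m+1)) (𝓝 (0:ℝ)) (𝓝 ((0:ℝ) ^ (m+1))) :=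
          (continuous_pow (m+1)).tendsto 0
        simpa [zero_pow (Nat.succ_ne_zero m)] using this.mono_left nhdsWithin_le_nhds
      have tC : Tendsto (fun x : ℝ => Real.log (G x) + 1) (𝓝[>] (0:ℝ))
          (𝓝 (Real.log (G 0) + 1)) :=
        (((Real.continuousAt_log hG0pos.ne').tendsto.comp tG).add tendsto_const_nhds)
      have T := (((tendsto_const_nhds (x := (m+2:ℝ))).mul tG).add (tid.mul tG')).mul
        (((tendsto_const_nhds (x := (m+2:ℝ))).mul tB).add (tD.mul tC))
      rw [hφ]
      convert T using 2
      ring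
    have hL : Tendsto (deriv h) (𝓝[>] (0:ℝ)) (𝓝 0) := hTφ.congr' (heq.mono fun x hx => hx.symm)
    have hbdd : BddAbove ((fun x => |deriv h x|) '' Set.Ioo 0 (s/2)) :=
      bdd_of_tendsto (half_pos hs0) (by linarith : s/2 < s) hderivcont hL
    exact iff_of_true hbdd (fun hc => hc.2 hdf0')
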